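/- For every real number α > 0 and every t ∈ (−∞, 0), one has χ(t)·ζ″(t) − χ″(t) > 0 and the second equation of the ODE system of Section 4.3 holds: (χ(t) + χ′(t)²/(χ(t)·ζ″(t) − χ″(t)))·e^{ζ(t)+t} = 1/α + 1. -/

import Mathlib

/-- For a real number `α > 0`, define `ζ(t) = log((1/α + 1)/(1/α + 1 − e^t))` and
`χ(t) = (1/α² − 1 + e^t − (1/α + 1)·t)/(1/α + 1 − e^t)` on `(−∞, 0)`.
Then for every `t < 0` one has `χ(t)·ζ″(t) − χ″(t) > 0` and the second ODE of
Section 4.3 holds: `(χ(t) + χ′(t)²/(χ(t)·ζ″(t) − χ″(t)))·e^{ζ(t)+t} = 1/α + 1`. -/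
theorem stmt_1 (α : ℝ) (hα : 0 < α) (ζ χ : ℝ → ℝ)
    (hζ : ∀ s, ζ s = Real.log ((1 / α + 1) / (1 / α + 1 - Real.exp s)))
    (hχ : ∀ s, χ s =
      (1 / α ^ 2 - 1 + Real.exp s - (1 / α + 1) * s) / (1 / α + 1 - Real.exp s))
    (t : ℝ) (ht : t < 0) :
    0 < χ t * deriv (deriv ζ) t - deriv (deriv χ) t ∧
    (χ t + (deriv χ t) ^ 2 / (χ t * deriv (deriv ζ) t - deriv (deriv χ) t)) *
        Real.exp (ζ t + t) = 1 / α + 1 := by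
  set c : ℝ := 1 / α + 1 with hc
  have hc1 : 1 < c := by
    have : 0 < 1 / α := by positivity
    simp only [hc]; linarith
  have hc0 : 0 < c := by linarith
  have hD : ∀ s : ℝ, s < 0 → 0 < c - Real.exp s := by
    intro s hs
    have := Real.exp_lt_one_iff.mpr hs
    linarith
  -- first derivative of ζ on (-∞,0)
  have hZd : ∀ s : ℝ, s < 0 →
      HasDerivAt ζ (Real.exp s / (c - Real.exp s)) s := by
    intro s hs
    have h1 : HasDerivAt (fun u => c - Real.exp u) (-Real.exp s) s :=
      (Real.hasDerivAt_exp s).const_sub c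
    have h2 := (h1.log (ne_of_gt (hD s hs))).const_sub (Real.log c)
    have heq : ζ =ᶠ[nhds s] (fun u => Real.log c - Real.log (c - Real.exp u)) := by
      filter_upwards [Iio_mem_nhds hs] with u hu
      rw [hζ u, Real.log_div (ne_of_gt hc0) (ne_of_gt (hD u hu))]
    have h3 : HasDerivAt ζ (-(-Real.exp s / (c - Real.exp s))) s :=
      h2.congr_of_eventuallyEq heq
    convert h3 using 1
    ring
  -- second derivative of ζ at t
  have hEt := Real.exp_pos t
  have hDt := hD t ht
  have hz2 : deriv (deriv ζ) t =
      (Real.exp t * (c - Real.exp t) - Real.exp t * (-Real.exp t)) /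
        (c - Real.exp t) ^ 2 := by
    have heq : deriv ζ =ᶠ[nhds t] (fun s => Real.exp s / (c - Real.exp s)) := by
      filter_upwards [Iio_mem_nhds ht] with s hs using (hZd s hs).deriv
    rw [heq.deriv_eq]
    exact ((Real.hasDerivAt_exp t).div ((Real.hasDerivAt_exp t).const_sub c)
      (ne_of_gt hDt)).deriv
  -- first derivative of χ on (-∞,0)
  have hχf : χ = fun s =>
      (1 / α ^ 2 - 1 + Real.exp s - c * s) / (c - Real.exp s) := funext hχ
  have hNd : ∀ s : ℝ, HasDerivAt (fun u => 1 / α ^ 2 - 1 + Real.exp u - c * u)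
      (Real.exp s - c) s := by
    intro s
    have h := ((Real.hasDerivAt_exp s).const_add (1 / α ^ 2 - 1)).sub
      ((hasDerivAt_id s).const_mul c)
    exact h.congr_deriv (by ring)
  have hXd : ∀ s : ℝ, s < 0 → HasDerivAt χ
      (((Real.exp s - c) * (c - Real.exp s) -
        (1 / α ^ 2 - 1 + Real.exp s - c * s) * (-Real.exp s)) /
        ((c - Real.exp s) ^ 2)) s := by
    intro s hs
    rw [hχf]
    exact (hNd s).div ((Real.hasDerivAt_exp s).const_sub c) (ne_of_gt (hD s hs))
  have hx1 : deriv χ t =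
      ((Real.exp t - c) * (c - Real.exp t) -
        (1 / α ^ 2 - 1 + Real.exp t - c * t) * (-Real.exp t)) /
        ((c - Real.exp t) ^ 2) := (hXd t ht).deriv
  -- second derivative of χ at t
  have hUd : HasDerivAt (fun s => (Real.exp s - c) * (c - Real.exp s) -
      (1 / α ^ 2 - 1 + Real.exp s - c * s) * (-Real.exp s))
      ((Real.exp t * (c - Real.exp t) + (Real.exp t - c) * (-Real.exp t)) -
        ((Real.exp t - c) * (-Real.exp t) +
          (1 / α ^ 2 - 1 + Real.exp t - c * t) * (-Real.exp t))) t :=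
    (((Real.hasDerivAt_exp t).sub_const c).mul
        ((Real.hasDerivAt_exp t).const_sub c)).sub
      ((hNd t).mul (Real.hasDerivAt_exp t).neg)
  have hDen : HasDerivAt (fun s => (c - Real.exp s) ^ 2)
      (2 * (c - Real.exp t) ^ 1 * (-Real.exp t)) t :=
    ((Real.hasDerivAt_exp t).const_sub c).pow 2
  have hx2 : deriv (deriv χ) t =
      (((Real.exp t * (c - Real.exp t) + (Real.exp t - c) * (-Real.exp t)) -
        ((Real.exp t - c) * (-Real.exp t) +
          (1 / α ^ 2 - 1 + Real.exp t - c * t) * (-Real.exp t))) *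
        ((c - Real.exp t) ^ 2) -
       ((Real.exp t - c) * (c - Real.exp t) -
        (1 / α ^ 2 - 1 + Real.exp t - c * t) * (-Real.exp t)) *
        (2 * (c - Real.exp t) ^ 1 * (-Real.exp t))) /
        ((c - Real.exp t) ^ 2) ^ 2 := by
    have heq : deriv χ =ᶠ[nhds t] (fun s =>
        ((Real.exp s - c) * (c - Real.exp s) -
          (1 / α ^ 2 - 1 + Real.exp s - c * s) * (-Real.exp s)) /
          ((c - Real.exp s) ^ 2)) := by
      filter_upwards [Iio_mem_nhds ht] with s hs using (hXd s hs).deriv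
    rw [heq.deriv_eq]
    exact (hUd.div hDen (by positivity)).deriv
  -- key positivity : G := c*(1-E) + t*E > 0
  have h1t : (1 - t) * Real.exp t < 1 := by
    have h := Real.add_one_lt_exp (show -t ≠ 0 by intro h; rw [neg_eq_zero] at h; linarith)
    rw [Real.exp_neg] at h
    have h2 := mul_lt_mul_of_pos_right h hEt
    rwa [inv_mul_cancel₀ hEt.ne', show (-t + 1) * Real.exp t = (1 - t) * Real.exp t by ring]
      at h2
  have hE1 : Real.exp t < 1 := Real.exp_lt_one_iff.mpr ht
  have hG : 0 < c * (1 - Real.exp t) + t * Real.exp t := by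
    nlinarith [mul_pos (sub_pos.mpr hc1) (sub_pos.mpr hE1)]
  -- key algebra : D^2 - N*E = c*G
  have hKey : (c - Real.exp t) ^ 2 -
      (1 / α ^ 2 - 1 + Real.exp t - c * t) * Real.exp t =
      c * (c * (1 - Real.exp t) + t * Real.exp t) := by
    rw [hc]
    field_simp
    ring
  -- value of the "discriminant"
  have hPval : χ t * deriv (deriv ζ) t - deriv (deriv χ) t =
      Real.exp t * (c * (c * (1 - Real.exp t) + t * Real.exp t)) /
        (c - Real.exp t) ^ 3 := by
    rw [hz2, hx2, hχ t, ← hKey]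
    field_simp
    ring
  have hx1' : deriv χ t =
      -(c * (c * (1 - Real.exp t) + t * Real.exp t)) / (c - Real.exp t) ^ 2 := by
    rw [hx1]
    congr 1
    linear_combination (-1 : ℝ) * hKey
  have hcG : 0 < c * (c * (1 - Real.exp t) + t * Real.exp t) := mul_pos hc0 hG
  constructor
  · rw [hPval]
    positivity
  · have hexpζ : Real.exp (ζ t + t) = c / (c - Real.exp t) * Real.exp t := by
      rw [Real.exp_add, hζ t, Real.exp_log (div_pos hc0 hDt)]
    have h2nd : (-(c * (c * (1 - Real.exp t) + t * Real.exp t)) / (c - Real.exp t) ^ 2) ^ 2 /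
        (Real.exp t * (c * (c * (1 - Real.exp t) + t * Real.exp t)) / (c - Real.exp t) ^ 3) =
        c * (c * (1 - Real.exp t) + t * Real.exp t) / (Real.exp t * (c - Real.exp t)) := by
      rw [div_eq_div_iff (by positivity) (by positivity)]
      field_simp
    have hsum : χ t + (deriv χ t) ^ 2 /
        (χ t * deriv (deriv ζ) t - deriv (deriv χ) t) =
        (c - Real.exp t) / Real.exp t := by
      rw [hPval, hx1', h2nd, hχ t, div_add_div _ _ (ne_of_gt hDt) (by positivity),
        div_eq_div_iff (by positivity) (ne_of_gt hEt)]
      linear_combination Real.exp t * (c - Real.exp t) * hKey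
    rw [hsum, hexpζ]
    field_simp
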